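/- For each integer n ≥ 1, consider a recursive estimation process (θ̂_t^{(n)})_{t≥0} with θ̂_0^{(n)} = θ*, per-step conditional tail bound with rate function r(m) = m^κ where κ ≥ γ/2, sample sizes n_0 = n, n_t = c_t·n with c_t = t^{1+s} for some s > 0, and small conditional bias: there exist ρ ≥ 1, a constant b > 0 and nonnegative reals v_1, …, v_p such that for every t ≥ 1 and every coordinate i, almost surely |E[θ̂_{t,i}^{(n)} | F_{t−1}] − θ̂_{t−1,i}^{(n)}| ≤ b · v_i · n_{t−1}^{−ρ}. Then for every δ > 0, lim_{n→∞} limsup_{T→∞} P(‖θ̂_T^{(n)} − θ*‖₂ ≥ δ) = 0. -/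

import Mathlib

open MeasureTheory ProbabilityTheory Filter

/-- The Euclidean (`ℓ²`) norm of a vector in `ℝ^p`. -/
noncomputable def l2norm {p : ℕ} (x : Fin p → ℝ) : ℝ := Real.sqrt (∑ i, (x i) ^ 2)

lemma abs_le_l2norm {p : ℕ} (x : Fin p → ℝ) (i : Fin p) : |x i| ≤ l2norm x := by
  rw [l2norm, ← Real.sqrt_sq_eq_abs]
  exact Real.sqrt_le_sqrt (Finset.single_le_sum (f := fun j => (x j) ^ 2)
    (fun j _ => sq_nonneg _) (Finset.mem_univ i))

lemma exists_coord_ge {p : ℕ} (hp : 1 ≤ p) (x : Fin p → ℝ) {δ : ℝ}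
    (hδ : 0 < δ) (h : δ ≤ l2norm x) : ∃ i, δ / Real.sqrt p ≤ |x i| := by
  by_contra hcon
  push_neg at hcon
  have hps : 0 < Real.sqrt p := Real.sqrt_pos.mpr (by exact_mod_cast (by omega : 0 < p))
  have hne : Nonempty (Fin p) := ⟨⟨0, by omega⟩⟩
  have hsum : ∑ i, (x i) ^ 2 < δ ^ 2 := by
    have h1 : ∑ i, (x i) ^ 2 < ∑ _i : Fin p, (δ / Real.sqrt p) ^ 2 := by
      refine Finset.sum_lt_sum_of_nonempty Finset.univ_nonempty (fun i _ => ?_)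
      have h1 := hcon i
      have h2 : 0 ≤ |x i| := abs_nonneg _
      nlinarith [sq_abs (x i)]
    refine h1.trans_le (le_of_eq ?_)
    rw [Finset.sum_const, Finset.card_univ, Fintype.card_fin, nsmul_eq_mul, div_pow,
      Real.sq_sqrt (by positivity : (0:ℝ) ≤ (p:ℝ))]
    have hp0 : (p:ℝ) ≠ 0 := by positivity
    field_simp
  have hlt : l2norm x < δ := by
    rw [l2norm]
    calc Real.sqrt (∑ i, (x i) ^ 2) < Real.sqrt (δ ^ 2) :=
          Real.sqrt_lt_sqrt (Finset.sum_nonneg fun i _ => sq_nonneg _) hsum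
      _ = δ := by rw [Real.sqrt_sq hδ.le]
  linarith

lemma integrableOn_id_mul_exp_neg_mul_rpow {a γ : ℝ} (ha : 0 < a) (hγ : 0 < γ) :
    MeasureTheory.IntegrableOn (fun t : ℝ => t * Real.exp (-a * t ^ γ)) (Set.Ioi 0) := by
  have base : MeasureTheory.IntegrableOn
      (fun u : ℝ => u ^ (2 / γ - 1) * Real.exp (-a * u ^ (1:ℝ))) (Set.Ioi 0) :=
    integrableOn_rpow_mul_exp_neg_mul_rpow (by
      have : 0 < 2 / γ := by positivity
      linarith) one_pos ha
  have base' : MeasureTheory.IntegrableOn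
      (fun u : ℝ => u ^ (2 / γ - 1) * Real.exp (-a * u)) (Set.Ioi 0) := by
    refine base.congr_fun (fun u hu => ?_) measurableSet_Ioi
    dsimp only
    rw [Real.rpow_one]
  have key := (integrableOn_Ioi_comp_rpow_iff'
      (fun u : ℝ => u ^ (2 / γ - 1) * Real.exp (-a * u)) (p := γ) hγ.ne').mpr base'
  refine key.congr_fun (fun x hx => ?_) measurableSet_Ioi
  have hx0 : (0:ℝ) < x := hx
  have e1 : (x ^ γ) ^ (2 / γ - 1) = x ^ (2 - γ) := by
    rw [← Real.rpow_mul hx0.le]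
    congr 1
    field_simp
  dsimp only
  rw [smul_eq_mul, e1, ← mul_assoc, ← Real.rpow_add hx0]
  norm_num

lemma sq_moment_of_tail {Ω : Type} [MeasurableSpace Ω] (μ : Measure Ω) [IsProbabilityMeasure μ]
    {X : Ω → ℝ} (hXm : Measurable X) (hXnn : ∀ ω, 0 ≤ X ω)
    {C₁ a γ : ℝ} (hC₁ : 0 < C₁) (ha : 0 < a) (hγ : 0 < γ)
    (htail : ∀ u : ℝ, 0 < u → μ {ω | u < X ω} ≤ ENNReal.ofReal (C₁ * Real.exp (-a * u ^ γ))) :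
    Integrable (fun ω => (X ω) ^ 2) μ ∧
      ∫ ω, (X ω) ^ 2 ∂μ ≤ 2 * C₁ * ((1 / γ) * Real.Gamma (2 / γ)) * a ^ (-(2:ℝ) / γ) := by
  have hX2m : AEStronglyMeasurable (fun ω => (X ω) ^ 2) μ :=
    ((hXm.pow_const 2).aestronglyMeasurable)
  have hKnn : 0 ≤ 2 * C₁ * ((1 / γ) * Real.Gamma (2 / γ)) * a ^ (-(2:ℝ) / γ) := by
    have hΓ : 0 < Real.Gamma (2 / γ) := Real.Gamma_pos_of_pos (by positivity)
    positivity
  have layer : ∫⁻ ω, ENNReal.ofReal ((X ω) ^ 2) ∂μ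
      = ∫⁻ t in Set.Ioi 0, μ {ω | t < X ω} * ENNReal.ofReal (2 * t) := by
    have h := lintegral_comp_eq_lintegral_meas_lt_mul μ (f := X) (g := fun t => 2 * t)
      (Filter.Eventually.of_forall hXnn) hXm.aemeasurable
      (fun t _ => (continuous_const.mul continuous_id).intervalIntegrable 0 t)
      ((ae_restrict_iff' measurableSet_Ioi).mpr (Filter.Eventually.of_forall
        (fun t ht => by have := Set.mem_Ioi.mp ht; positivity)))
    rw [← h]
    refine lintegral_congr (fun ω => ?_)
    congr 1
    rw [intervalIntegral.integral_const_mul, integral_id]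
    ring
  have hbound : ∫⁻ t in Set.Ioi 0, μ {ω | t < X ω} * ENNReal.ofReal (2 * t)
      ≤ ∫⁻ t in Set.Ioi 0, ENNReal.ofReal (2 * C₁ * (t * Real.exp (-a * t ^ γ))) := by
    refine setLIntegral_mono' measurableSet_Ioi (fun t ht => ?_)
    have ht0 : (0:ℝ) < t := ht
    calc μ {ω | t < X ω} * ENNReal.ofReal (2 * t)
        ≤ ENNReal.ofReal (C₁ * Real.exp (-a * t ^ γ)) * ENNReal.ofReal (2 * t) :=
          mul_le_mul_left (htail t ht0) _
      _ = ENNReal.ofReal (2 * C₁ * (t * Real.exp (-a * t ^ γ))) := by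
          rw [← ENNReal.ofReal_mul (by positivity)]
          congr 1
          ring
  have hint : MeasureTheory.IntegrableOn
      (fun t : ℝ => 2 * C₁ * (t * Real.exp (-a * t ^ γ))) (Set.Ioi 0) :=
    (integrableOn_id_mul_exp_neg_mul_rpow ha hγ).const_mul _
  have hofReal : ∫⁻ t in Set.Ioi 0, ENNReal.ofReal (2 * C₁ * (t * Real.exp (-a * t ^ γ)))
      = ENNReal.ofReal (∫ t in Set.Ioi 0, 2 * C₁ * (t * Real.exp (-a * t ^ γ))) := by
    rw [← ofReal_integral_eq_lintegral_ofReal hint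
      ((ae_restrict_iff' measurableSet_Ioi).mpr (Filter.Eventually.of_forall
        (fun t ht => by have := Set.mem_Ioi.mp ht; positivity)))]
  have hval : ∫ t in Set.Ioi 0, 2 * C₁ * (t * Real.exp (-a * t ^ γ))
      = 2 * C₁ * ((1 / γ) * Real.Gamma (2 / γ)) * a ^ (-(2:ℝ) / γ) := by
    rw [MeasureTheory.integral_const_mul]
    have h1 : ∫ t in Set.Ioi 0, t * Real.exp (-a * t ^ γ)
        = ∫ t in Set.Ioi (0:ℝ), t ^ (1:ℝ) * Real.exp (-a * t ^ γ) :=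
      setIntegral_congr_fun measurableSet_Ioi (fun t ht => by rw [Real.rpow_one])
    rw [h1, integral_rpow_mul_exp_neg_mul_rpow hγ (by norm_num) ha]
    norm_num
    ring
  have hfin : ∫⁻ ω, ENNReal.ofReal ((X ω) ^ 2) ∂μ
      ≤ ENNReal.ofReal (2 * C₁ * ((1 / γ) * Real.Gamma (2 / γ)) * a ^ (-(2:ℝ) / γ)) := by
    rw [layer]
    exact hbound.trans (le_of_eq (hofReal.trans (by rw [hval])))
  have hInt : Integrable (fun ω => (X ω) ^ 2) μ := by
    refine ⟨hX2m, ?_⟩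
    rw [hasFiniteIntegral_iff_ofReal (Filter.Eventually.of_forall fun ω => sq_nonneg _)]
    exact lt_of_le_of_lt hfin ENNReal.ofReal_lt_top
  refine ⟨hInt, ?_⟩
  rw [integral_eq_lintegral_of_nonneg_ae (Filter.Eventually.of_forall fun ω => sq_nonneg _) hX2m]
  calc (∫⁻ ω, ENNReal.ofReal ((X ω) ^ 2) ∂μ).toReal
      ≤ (ENNReal.ofReal (2 * C₁ * ((1 / γ) * Real.Gamma (2 / γ)) * a ^ (-(2:ℝ) / γ))).toReal :=
        ENNReal.toReal_mono ENNReal.ofReal_ne_top hfin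
    _ = _ := ENNReal.toReal_ofReal hKnn


lemma integrable_mul_of_sq {Ω : Type} [MeasurableSpace Ω] (μ : Measure Ω)
    (M d : Ω → ℝ) (h1 : Integrable (fun ω => M ω ^ 2) μ) (h2 : Integrable (fun ω => d ω ^ 2) μ)
    (hm : Measurable M) (hd : Measurable d) :
    Integrable (fun ω => M ω * d ω) μ := by
  refine Integrable.mono' ((h1.add h2).const_mul (1/2 : ℝ))
    (hm.mul hd).aestronglyMeasurable
    (Filter.Eventually.of_forall (fun ω => ?_))
  rw [Real.norm_eq_abs, abs_mul]
  simp only [Pi.add_apply]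
  have ha := two_mul_le_add_sq |M ω| |d ω|
  have hb := sq_abs (M ω)
  have hc := sq_abs (d ω)
  linarith

lemma cheb {Ω : Type} [MeasurableSpace Ω] (μ : Measure Ω) [IsProbabilityMeasure μ]
    (M : Ω → ℝ) (hint : Integrable (fun ω => M ω ^ 2) μ) {ε : ℝ} (hε : 0 < ε) :
    (μ {ω | ε ≤ |M ω|}).toReal ≤ (∫ ω, M ω ^ 2 ∂μ) / ε ^ 2 := by
  have hsub : {ω | ε ≤ |M ω|} ⊆ {ω | ε ^ 2 ≤ M ω ^ 2} := by
    intro ω h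
    simp only [Set.mem_setOf_eq] at *
    nlinarith [abs_nonneg (M ω), sq_abs (M ω)]
  have hmarkov := mul_meas_ge_le_integral_of_nonneg
    (Filter.Eventually.of_forall (fun ω => sq_nonneg (M ω))) hint (ε ^ 2)
  have hmono : (μ {ω | ε ≤ |M ω|}).toReal ≤ (μ {ω | ε ^ 2 ≤ M ω ^ 2}).toReal :=
    ENNReal.toReal_mono (measure_ne_top μ _) (measure_mono hsub)
  have hε2 : (0:ℝ) < ε ^ 2 := by positivity
  rw [measureReal_def] at hmarkov
  rw [le_div_iff₀ hε2]
  nlinarith [ENNReal.toReal_nonneg (a := μ {ω | ε ^ 2 ≤ M ω ^ 2})]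

lemma martingale_decomp
    {Ω : Type} [mΩ : MeasurableSpace Ω] (μ : Measure Ω) [IsProbabilityMeasure μ]
    (𝔉 : Filtration ℕ mΩ) (f : ℕ → Ω → ℝ)
    (hfm : ∀ t, Measurable[𝔉 t] (f t))
    (h0_int : Integrable (f 0) μ)
    (κ2 B : ℕ → ℝ)
    (hΔ_int : ∀ u, Integrable (fun ω => (f (u+1) ω - f u ω) ^ 2) μ)
    (hΔ_val : ∀ u, ∫ ω, (f (u+1) ω - f u ω) ^ 2 ∂μ ≤ κ2 u)
    (hbias : ∀ u, ∀ᵐ ω ∂μ, |(μ[f (u+1) | 𝔉 u]) ω - f u ω| ≤ B u)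
    (T : ℕ) :
    ∃ M G : Ω → ℝ,
      (∀ ω, f T ω - f 0 ω = M ω + G ω) ∧
      (∀ᵐ ω ∂μ, |G ω| ≤ ∑ u ∈ Finset.range T, B u) ∧
      Integrable (fun ω => M ω ^ 2) μ ∧
      ∫ ω, M ω ^ 2 ∂μ ≤ ∑ u ∈ Finset.range T, (2 * κ2 u + 2 * B u ^ 2) := by
  have hB_nonneg : ∀ u, 0 ≤ B u := fun u => by
    obtain ⟨ω, hω⟩ := (hbias u).exists
    exact (abs_nonneg _).trans hω
  have hfle : ∀ t, 𝔉 t ≤ mΩ := fun t => 𝔉.le t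
  have hfmΩ : ∀ t, Measurable (f t) := fun t => (hfm t).mono (hfle t) le_rfl
  -- step differences
  have hΔm : ∀ u, Measurable (fun ω => f (u+1) ω - f u ω) :=
    fun u => (hfmΩ (u+1)).sub (hfmΩ u)
  have hΔmem : ∀ u, MemLp (fun ω => f (u+1) ω - f u ω) 2 μ := fun u =>
    (memLp_two_iff_integrable_sq (hΔm u).aestronglyMeasurable).mpr (hΔ_int u)
  have hΔint : ∀ u, Integrable (fun ω => f (u+1) ω - f u ω) μ := fun u =>
    (hΔmem u).integrable (by norm_num)
  have hf_int : ∀ t, Integrable (f t) μ := by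
    intro t
    induction t with
    | zero => exact h0_int
    | succ t ih =>
      have he : f (t+1) = fun ω => f t ω + (f (t+1) ω - f t ω) := by
        funext ω; ring
      rw [he]
      exact ih.add (hΔint t)
  -- bias terms
  have hgm : ∀ u, Measurable (fun ω => (μ[f (u+1) | 𝔉 u]) ω - f u ω) := fun u =>
    ((stronglyMeasurable_condExp.mono (hfle u)).measurable).sub (hfmΩ u)
  have hg_mem : ∀ u, MemLp (fun ω => (μ[f (u+1) | 𝔉 u]) ω - f u ω) 2 μ := by
    intro u
    refine MemLp.of_bound (hgm u).aestronglyMeasurable (B u) ?_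
    filter_upwards [hbias u] with ω hω
    rwa [Real.norm_eq_abs]
  have hg_sq_int : ∀ u, Integrable (fun ω => ((μ[f (u+1) | 𝔉 u]) ω - f u ω) ^ 2) μ := fun u =>
    (memLp_two_iff_integrable_sq (hgm u).aestronglyMeasurable).mp (hg_mem u)
  have hg_sq_val : ∀ u, ∫ ω, ((μ[f (u+1) | 𝔉 u]) ω - f u ω) ^ 2 ∂μ ≤ B u ^ 2 := by
    intro u
    have h1 : ∫ ω, ((μ[f (u+1) | 𝔉 u]) ω - f u ω) ^ 2 ∂μ ≤ ∫ _ω, B u ^ 2 ∂μ := by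
      refine integral_mono_ae (hg_sq_int u) (integrable_const _) ?_
      filter_upwards [hbias u] with ω hω
      nlinarith [abs_nonneg ((μ[f (u+1) | 𝔉 u]) ω - f u ω),
        sq_abs ((μ[f (u+1) | 𝔉 u]) ω - f u ω)]
    simpa using h1
  -- martingale differences
  set d : ℕ → Ω → ℝ := fun u ω => f (u+1) ω - (μ[f (u+1) | 𝔉 u]) ω with hddef
  have hdm : ∀ u, Measurable (d u) := fun u =>
    (hfmΩ (u+1)).sub ((stronglyMeasurable_condExp.mono (hfle u)).measurable)
  have hd_mem : ∀ u, MemLp (d u) 2 μ := by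
    intro u
    have : d u = fun ω => (f (u+1) ω - f u ω) - ((μ[f (u+1) | 𝔉 u]) ω - f u ω) := by
      funext ω; rw [hddef]; ring
    rw [this]
    exact MemLp.sub (hΔmem u) (hg_mem u)
  have hd_int : ∀ u, Integrable (d u) μ := fun u => (hd_mem u).integrable (by norm_num)
  have hd_sq_int : ∀ u, Integrable (fun ω => d u ω ^ 2) μ := fun u =>
    (memLp_two_iff_integrable_sq (hdm u).aestronglyMeasurable).mp (hd_mem u)
  have hd_sq_val : ∀ u, ∫ ω, d u ω ^ 2 ∂μ ≤ 2 * κ2 u + 2 * B u ^ 2 := by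
    intro u
    have h1 : ∫ ω, d u ω ^ 2 ∂μ
        ≤ ∫ ω, (2 * (f (u+1) ω - f u ω) ^ 2
            + 2 * ((μ[f (u+1) | 𝔉 u]) ω - f u ω) ^ 2) ∂μ := by
      refine integral_mono (hd_sq_int u)
        (((hΔ_int u).const_mul 2).add ((hg_sq_int u).const_mul 2)) (fun ω => ?_)
      simp only [hddef]
      nlinarith [sq_nonneg ((f (u+1) ω - f u ω) + ((μ[f (u+1) | 𝔉 u]) ω - f u ω))]
    rw [integral_add ((hΔ_int u).const_mul 2) ((hg_sq_int u).const_mul 2),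
      MeasureTheory.integral_const_mul, MeasureTheory.integral_const_mul] at h1
    have h2 := hΔ_val u
    have h3 := hg_sq_val u
    linarith
  -- partial sums
  set M : ℕ → Ω → ℝ := fun S ω => ∑ u ∈ Finset.range S, d u ω with hMdef
  have hMm : ∀ S, Measurable (M S) := fun S =>
    Finset.measurable_sum _ (fun u _ => hdm u)
  have hM_mem : ∀ S, MemLp (M S) 2 μ := by
    intro S
    have he : M S = ∑ u ∈ Finset.range S, d u := by
      funext ω
      rw [hMdef]
      simp [Finset.sum_apply]
    rw [he]
    exact memLp_finset_sum' (Finset.range S) (fun u _ => hd_mem u)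
  have hM_sq_int : ∀ S, Integrable (fun ω => M S ω ^ 2) μ := fun S =>
    (memLp_two_iff_integrable_sq (hMm S).aestronglyMeasurable).mp (hM_mem S)
  have hM_smF : ∀ S, StronglyMeasurable[𝔉 S] (M S) := by
    intro S
    refine Measurable.stronglyMeasurable ?_
    refine Finset.measurable_sum _ (fun u hu => ?_)
    have huS : u + 1 ≤ S := Finset.mem_range.mp hu
    exact ((hfm (u+1)).mono (𝔉.mono huS) le_rfl).sub
      ((stronglyMeasurable_condExp.mono (𝔉.mono (by omega : u ≤ S))).measurable)
  -- orthogonality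
  have hMd_sq : ∀ S, ∫ ω, M S ω ^ 2 ∂μ ≤ ∑ u ∈ Finset.range S, ∫ ω, d u ω ^ 2 ∂μ := by
    intro S
    induction S with
    | zero => simp [hMdef]
    | succ S ih =>
      have hprod_int : Integrable (fun ω => M S ω * d S ω) μ :=
        integrable_mul_of_sq μ (M S) (d S) (hM_sq_int S) (hd_sq_int S) (hMm S) (hdm S)
      have hzero : ∫ ω, M S ω * d S ω ∂μ = 0 := by
        have hdc : μ[d S | 𝔉 S] =ᵐ[μ] 0 := by
          have h1 : μ[d S | 𝔉 S]
              =ᵐ[μ] μ[f (S+1) | 𝔉 S] - μ[μ[f (S+1) | 𝔉 S] | 𝔉 S] := by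
            have heq : d S = f (S+1) - μ[f (S+1) | 𝔉 S] := by
              funext ω; rw [hddef]; rfl
            rw [heq]
            exact condExp_sub (hf_int (S+1)) integrable_condExp (𝔉 S)
          have h2 : μ[μ[f (S+1) | 𝔉 S] | 𝔉 S] =ᵐ[μ] μ[f (S+1) | 𝔉 S] :=
            condExp_condExp_of_le le_rfl (hfle S)
          filter_upwards [h1, h2] with ω e1 e2
          simp only [Pi.sub_apply, Pi.zero_apply] at *
          rw [e1, e2]
          ring
        have hcond : μ[fun ω => M S ω * d S ω | 𝔉 S]
            =ᵐ[μ] fun ω => M S ω * (μ[d S | 𝔉 S]) ω :=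
          condExp_mul_of_stronglyMeasurable_left (hM_smF S) hprod_int (hd_int S)
        calc ∫ ω, M S ω * d S ω ∂μ
            = ∫ ω, (μ[fun ω => M S ω * d S ω | 𝔉 S]) ω ∂μ :=
              (integral_condExp (hfle S)).symm
          _ = 0 := by
              rw [integral_congr_ae hcond]
              have hz : ∀ᵐ ω ∂μ, M S ω * (μ[d S | 𝔉 S]) ω = 0 := by
                filter_upwards [hdc] with ω e
                simp only [Pi.zero_apply] at e
                rw [e, mul_zero]
              rw [integral_congr_ae hz, integral_zero]
      have hexp : ∀ ω, M (S+1) ω ^ 2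
          = M S ω ^ 2 + ((2:ℝ) * (M S ω * d S ω) + d S ω ^ 2) := by
        intro ω
        simp only [hMdef, Finset.sum_range_succ]
        ring
      have hsum_eq : ∫ ω, M (S+1) ω ^ 2 ∂μ
          = ∫ ω, M S ω ^ 2 ∂μ
            + ((2:ℝ) * ∫ ω, M S ω * d S ω ∂μ + ∫ ω, d S ω ^ 2 ∂μ) := by
        have hI3 : Integrable (fun ω => (2:ℝ) * (M S ω * d S ω)) μ := hprod_int.const_mul 2
        have hI2 : Integrable (fun ω => (2:ℝ) * (M S ω * d S ω) + d S ω ^ 2) μ :=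
          hI3.add (hd_sq_int S)
        simp_rw [hexp]
        rw [integral_add (hM_sq_int S) hI2, integral_add hI3 (hd_sq_int S),
          MeasureTheory.integral_const_mul]
      rw [hsum_eq, hzero, Finset.sum_range_succ]
      linarith
  -- conclusion
  refine ⟨M T, fun ω => ∑ u ∈ Finset.range T, ((μ[f (u+1) | 𝔉 u]) ω - f u ω), ?_, ?_, ?_, ?_⟩
  · intro ω
    rw [hMdef, ← Finset.sum_add_distrib]
    calc f T ω - f 0 ω = ∑ u ∈ Finset.range T, (f (u+1) ω - f u ω) :=
          (Finset.sum_range_sub (fun t => f t ω) T).symm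
      _ = ∑ u ∈ Finset.range T, (d u ω + ((μ[f (u+1) | 𝔉 u]) ω - f u ω)) := by
          refine Finset.sum_congr rfl (fun u _ => ?_)
          rw [hddef]
          ring
  · filter_upwards [ae_all_iff.mpr hbias] with ω hω
    calc |∑ u ∈ Finset.range T, ((μ[f (u+1) | 𝔉 u]) ω - f u ω)|
        ≤ ∑ u ∈ Finset.range T, |(μ[f (u+1) | 𝔉 u]) ω - f u ω| :=
          Finset.abs_sum_le_sum_abs _ _
      _ ≤ ∑ u ∈ Finset.range T, B u := Finset.sum_le_sum (fun u _ => hω u)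
  · exact hM_sq_int T
  · exact (hMd_sq T).trans (Finset.sum_le_sum (fun u _ => hd_sq_val u))

set_option maxHeartbeats 2000000 in
/-- For recursive estimation processes `(θ̂_t^{(n)})` with `θ̂_0^{(n)} = θ*`,
per-step conditional tail bound with rate function `r(m) = m^κ` where `κ ≥ γ/2`, sample sizes
`n_0 = n`, `n_t = c_t n` with `c_t = t^{1+s}` (`s > 0`), and small conditional bias
(`|E[θ̂_{t,i} | F_{t−1}] − θ̂_{t−1,i}| ≤ b v_i n_{t−1}^{−ρ}` a.s. with `ρ ≥ 1`), for every
`δ > 0`: `lim_{n→∞} limsup_{T→∞} P(‖θ̂_T^{(n)} − θ*‖₂ ≥ δ) = 0`. -/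
theorem stmt_7
    {Ω : Type} [mΩ : MeasurableSpace Ω] (μ : Measure Ω) [IsProbabilityMeasure μ]
    (p : ℕ) (hp : 1 ≤ p) (θstar : Fin p → ℝ)
    (C₁ C₂ γ κ s ρ b : ℝ) (hC₁ : 0 < C₁) (hC₂ : 0 < C₂) (hγ : 0 < γ)
    (hκγ : γ / 2 ≤ κ) (hs : 0 < s) (hρ : 1 ≤ ρ) (hb : 0 < b)
    (v : Fin p → ℝ) (hv : ∀ i, 0 ≤ v i)
    (c : ℕ → ℝ) (hc0 : c 0 = 1) (hc : ∀ t : ℕ, 1 ≤ t → c t = (t : ℝ) ^ ((1 : ℝ) + s))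
    (F : ℕ → Filtration ℕ mΩ)
    (θhat : ℕ → ℕ → Ω → (Fin p → ℝ))
    (hadapt : ∀ n, Adapted (F n) (θhat n))
    (h0 : ∀ n, ∀ᵐ ω ∂μ, θhat n 0 ω = θstar)
    (htail : ∀ n : ℕ, 1 ≤ n → ∀ t : ℕ, 1 ≤ t → ∀ δ' : ℝ, 0 < δ' →
      ∀ᵐ ω ∂μ,
        (μ[Set.indicator {ω' | δ' < l2norm (θhat n t ω' - θhat n (t - 1) ω')}
            (fun _ => (1 : ℝ)) | (F n) (t - 1)]) ω
          ≤ C₁ * Real.exp (-C₂ * (c (t - 1) * n) ^ κ * δ' ^ γ))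
    (hbias : ∀ n : ℕ, 1 ≤ n → ∀ t : ℕ, 1 ≤ t → ∀ i : Fin p,
      ∀ᵐ ω ∂μ,
        |(μ[(fun ω' => θhat n t ω' i) | (F n) (t - 1)]) ω - θhat n (t - 1) ω i|
          ≤ b * v i * (c (t - 1) * n) ^ (-ρ)) :
    ∀ δ : ℝ, 0 < δ →
      Tendsto (fun n : ℕ =>
          limsup (fun T : ℕ => (μ {ω | δ ≤ l2norm (θhat n T ω - θstar)}).toReal) atTop)
        atTop (nhds 0) := by
  intro δ hδ
  have hp0 : (0:ℝ) < p := by exact_mod_cast (by omega : 0 < p)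
  have hsp0 : 0 < Real.sqrt p := Real.sqrt_pos.mpr hp0
  set sp : ℝ := Real.sqrt p with hsp
  set ε : ℝ := δ / (2 * sp) with hε_def
  have hε : 0 < ε := by positivity
  -- weights
  set w : ℕ → ℝ := fun u => if u = 0 then 1 else (u:ℝ) ^ (-(1:ℝ) - s) with hw
  have hw_nonneg : ∀ u, 0 ≤ w u := by
    intro u
    by_cases h : u = 0
    · simp [hw, h]
    · simp only [hw, h, if_false]
      positivity
  have hw_le_one : ∀ u, w u ≤ 1 := by
    intro u
    by_cases h : u = 0
    · simp [hw, h]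
    · simp only [hw, h, if_false]
      have hu1 : (1:ℝ) ≤ (u:ℝ) := by exact_mod_cast Nat.one_le_iff_ne_zero.mpr h
      calc (u:ℝ) ^ (-(1:ℝ) - s) ≤ (u:ℝ) ^ (0:ℝ) :=
            Real.rpow_le_rpow_of_exponent_le hu1 (by linarith)
        _ = 1 := Real.rpow_zero _
  have hw_summable : Summable w := by
    rw [← summable_nat_add_iff 1]
    refine Summable.congr ((summable_nat_add_iff 1).mpr
      (Real.summable_nat_rpow.mpr (by linarith : -(1:ℝ) - s < -1))) (fun u => ?_)
    simp [hw]
  set W : ℝ := ∑' u, w u with hW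
  have hW_nonneg : 0 ≤ W := tsum_nonneg hw_nonneg
  have hWsum : ∀ T : ℕ, ∑ u ∈ Finset.range T, w u ≤ W := fun T =>
    Summable.sum_le_tsum (Finset.range T) (fun u _ => hw_nonneg u) hw_summable
  -- facts about c
  have hc_pos : ∀ u : ℕ, 0 < c u := by
    intro u
    rcases Nat.eq_zero_or_pos u with h | h
    · simp [h, hc0]
    · rw [hc u h]
      have : (0:ℝ) < (u:ℝ) := by exact_mod_cast h
      positivity
  have hcn_ge_one : ∀ n : ℕ, 1 ≤ n → ∀ u : ℕ, (1:ℝ) ≤ c u * n := by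
    intro n hn u
    have hn1 : (1:ℝ) ≤ (n:ℝ) := by exact_mod_cast hn
    rcases Nat.eq_zero_or_pos u with h | h
    · simpa [h, hc0] using hn1
    · have hu1 : (1:ℝ) ≤ (u:ℝ) := by exact_mod_cast h
      have hcu : (1:ℝ) ≤ c u := by
        rw [hc u h]
        calc (1:ℝ) = (u:ℝ) ^ (0:ℝ) := (Real.rpow_zero _).symm
          _ ≤ (u:ℝ) ^ ((1:ℝ) + s) := Real.rpow_le_rpow_of_exponent_le hu1 (by linarith)
      nlinarith
  have hkey : ∀ n : ℕ, 1 ≤ n → ∀ u : ℕ, ∀ q : ℝ, 1 ≤ q → (c u * n) ^ (-q) ≤ w u / n := by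
    intro n hn u q hq
    have h1 : (1:ℝ) ≤ c u * n := hcn_ge_one n hn u
    have hn0 : (0:ℝ) < n := by exact_mod_cast hn
    have hcu := hc_pos u
    have h2 : (c u * n) ^ (-q) ≤ (c u * n) ^ (-1:ℝ) :=
      Real.rpow_le_rpow_of_exponent_le h1 (by linarith)
    refine h2.trans ?_
    rw [Real.rpow_neg_one, mul_inv]
    have h3 : (c u)⁻¹ ≤ w u := by
      rcases Nat.eq_zero_or_pos u with h | h
      · simp [h, hc0, hw]
      · have hu0 : (0:ℝ) < (u:ℝ) := by exact_mod_cast h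
        have hne : u ≠ 0 := by omega
        rw [hc u h, hw]
        simp only [hne, if_false]
        rw [← Real.rpow_neg hu0.le]
        refine le_of_eq ?_
        congr 1
        ring
    calc (c u)⁻¹ * (n:ℝ)⁻¹ ≤ w u * (n:ℝ)⁻¹ :=
          mul_le_mul_of_nonneg_right h3 (by positivity)
      _ = w u / n := by rw [div_eq_mul_inv]
  -- constants
  set K : ℝ := 2 * C₁ * ((1 / γ) * Real.Gamma (2 / γ)) * C₂ ^ (-(2:ℝ) / γ) with hK
  have hK_nonneg : 0 ≤ K := by
    have hΓ : 0 < Real.Gamma (2 / γ) := Real.Gamma_pos_of_pos (by positivity)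
    rw [hK]
    positivity
  set D : Fin p → ℝ := fun i => 2 * K + 2 * (b * v i) ^ 2 with hD
  have hD_nonneg : ∀ i, 0 ≤ D i := by
    intro i
    have := sq_nonneg (b * v i)
    simp only [hD]
    linarith
  set A : ℝ := (∑ i, D i * W) / ε ^ 2 with hA
  -- main per-n estimate
  have main : ∀ n : ℕ, 1 ≤ n → (∀ i, b * v i * W / n ≤ ε) → ∀ T : ℕ,
      (μ {ω | δ ≤ l2norm (θhat n T ω - θstar)}).toReal ≤ A / n := by
    intro n hn hsmall
    have hn0 : (0:ℝ) < n := by exact_mod_cast hn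
    have hn1 : (1:ℝ) ≤ (n:ℝ) := by exact_mod_cast hn
    have hFle : ∀ t, (F n) t ≤ mΩ := fun t => (F n).le t
    have hmeasF : ∀ t, Measurable[(F n) t] (θhat n t) := fun t => hadapt n t
    have hmeasΩ : ∀ t, Measurable (θhat n t) := fun t => (hmeasF t).mono (hFle t) le_rfl
    have hfm : ∀ t (i : Fin p), Measurable (fun ω => θhat n t ω i) :=
      fun t i => (measurable_pi_apply i).comp (hmeasΩ t)
    have hfmF : ∀ t (i : Fin p), Measurable[(F n) t] (fun ω => θhat n t ω i) :=
      fun t i => (measurable_pi_apply i).comp (hmeasF t)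
    -- step norms
    have hNm : ∀ u : ℕ, Measurable (fun ω => l2norm (θhat n (u+1) ω - θhat n u ω)) := by
      intro u
      have h1 : Measurable fun ω => ∑ i, (θhat n (u+1) ω i - θhat n u ω i) ^ 2 :=
        Finset.measurable_sum _ (fun i _ => ((hfm (u+1) i).sub (hfm u i)).pow_const 2)
      exact Real.continuous_sqrt.measurable.comp h1
    -- unconditional tail bound
    have htail' : ∀ u : ℕ, ∀ d : ℝ, 0 < d →
        μ {ω | d < l2norm (θhat n (u+1) ω - θhat n u ω)}
          ≤ ENNReal.ofReal (C₁ * Real.exp (-(C₂ * (c u * n) ^ κ) * d ^ γ)) := by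
      intro u d hd
      have h := htail n hn (u+1) (by omega) d hd
      simp only [Nat.add_sub_cancel] at h
      have hS : MeasurableSet {ω | d < l2norm (θhat n (u+1) ω - θhat n u ω)} :=
        measurableSet_lt measurable_const (hNm u)
      have hind : Integrable
          (Set.indicator {ω' | d < l2norm (θhat n (u+1) ω' - θhat n u ω')} (fun _ => (1:ℝ))) μ :=
        (integrable_const (1:ℝ)).indicator hS
      have h1 : ∫ ω, Set.indicator {ω' | d < l2norm (θhat n (u+1) ω' - θhat n u ω')}
          (fun _ => (1:ℝ)) ω ∂μ
          = (μ {ω | d < l2norm (θhat n (u+1) ω - θhat n u ω)}).toReal := by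
        rw [integral_indicator_const (1:ℝ) hS]
        simp [measureReal_def]
      have h2 : ∫ ω, (μ[Set.indicator {ω' | d < l2norm (θhat n (u+1) ω' - θhat n u ω')}
          (fun _ => (1:ℝ)) | (F n) u]) ω ∂μ
          = (μ {ω | d < l2norm (θhat n (u+1) ω - θhat n u ω)}).toReal := by
        rw [integral_condExp (hFle u)]
        exact h1
      have h3 : ∫ ω, (μ[Set.indicator {ω' | d < l2norm (θhat n (u+1) ω' - θhat n u ω')}
          (fun _ => (1:ℝ)) | (F n) u]) ω ∂μ
          ≤ ∫ _ω, C₁ * Real.exp (-C₂ * (c u * n) ^ κ * d ^ γ) ∂μ :=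
        integral_mono_ae integrable_condExp (integrable_const _) h
      rw [h2, integral_const] at h3
      simp only [probReal_univ, measure_univ, ENNReal.toReal_one, smul_eq_mul, one_mul] at h3
      have h4 : (μ {ω | d < l2norm (θhat n (u+1) ω - θhat n u ω)}).toReal
          ≤ C₁ * Real.exp (-(C₂ * (c u * n) ^ κ) * d ^ γ) := by
        have he : -(C₂ * (c u * (n:ℝ)) ^ κ) * d ^ γ = -C₂ * (c u * (n:ℝ)) ^ κ * d ^ γ := by ring
        rw [he]
        exact h3
      rw [← ENNReal.ofReal_toReal (measure_ne_top μ _)]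
      exact ENNReal.ofReal_le_ofReal h4
    -- second moments of step norms
    set q : ℝ := 2 * κ / γ with hq
    have hq1 : 1 ≤ q := by
      rw [hq, le_div_iff₀ hγ]
      linarith
    have hau : ∀ u : ℕ, 0 < C₂ * (c u * n) ^ κ := by
      intro u
      have h1 := hc_pos u
      positivity
    have hmom : ∀ u : ℕ, Integrable (fun ω => (l2norm (θhat n (u+1) ω - θhat n u ω)) ^ 2) μ ∧
        ∫ ω, (l2norm (θhat n (u+1) ω - θhat n u ω)) ^ 2 ∂μ ≤ K * (w u / n) := by
      intro u
      obtain ⟨h1, h2⟩ := sq_moment_of_tail μ (hNm u) (fun ω => Real.sqrt_nonneg _)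
        hC₁ (hau u) hγ (htail' u)
      refine ⟨h1, h2.trans ?_⟩
      have hx1 : (1:ℝ) ≤ c u * n := hcn_ge_one n hn u
      have hx0 : (0:ℝ) ≤ c u * n := by linarith
      have e1 : (C₂ * (c u * (n:ℝ)) ^ κ) ^ (-(2:ℝ)/γ)
          = C₂ ^ (-(2:ℝ)/γ) * ((c u * (n:ℝ)) ^ κ) ^ (-(2:ℝ)/γ) :=
        Real.mul_rpow hC₂.le (Real.rpow_nonneg hx0 _)
      have e2 : ((c u * (n:ℝ)) ^ κ) ^ (-(2:ℝ)/γ) = (c u * (n:ℝ)) ^ (-q) := by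
        rw [← Real.rpow_mul hx0]
        congr 1
        rw [hq]
        ring
      have e3 := hkey n hn u q hq1
      calc 2 * C₁ * ((1 / γ) * Real.Gamma (2 / γ)) * (C₂ * (c u * (n:ℝ)) ^ κ) ^ (-(2:ℝ)/γ)
          = K * ((c u * (n:ℝ)) ^ (-q)) := by rw [e1, e2, hK]; ring
        _ ≤ K * (w u / n) := mul_le_mul_of_nonneg_left e3 hK_nonneg
    -- per-coordinate martingale decomposition
    have per_i : ∀ i : Fin p, ∀ T : ℕ, ∃ M G : Ω → ℝ,
        (∀ ω, θhat n T ω i - θhat n 0 ω i = M ω + G ω) ∧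
        (∀ᵐ ω ∂μ, |G ω| ≤ b * v i * W / n) ∧
        (μ {ω | ε ≤ |M ω|}).toReal ≤ D i * W / n / ε ^ 2 := by
      intro i T
      have hΔsq_int : ∀ u : ℕ, Integrable
          (fun ω => (θhat n (u+1) ω i - θhat n u ω i) ^ 2) μ := by
        intro u
        refine Integrable.mono' (hmom u).1
          (((hfm (u+1) i).sub (hfm u i)).pow_const 2).aestronglyMeasurable
          (Filter.Eventually.of_forall (fun ω => ?_))
        rw [Real.norm_eq_abs, abs_of_nonneg (sq_nonneg _)]
        have h1 : |(θhat n (u+1) ω - θhat n u ω) i| ≤ l2norm (θhat n (u+1) ω - θhat n u ω) :=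
          abs_le_l2norm _ i
        have h2 : (θhat n (u+1) ω - θhat n u ω) i = θhat n (u+1) ω i - θhat n u ω i := rfl
        rw [h2] at h1
        nlinarith [abs_nonneg (θhat n (u+1) ω i - θhat n u ω i),
          sq_abs (θhat n (u+1) ω i - θhat n u ω i)]
      have hΔsq_val : ∀ u : ℕ, ∫ ω, (θhat n (u+1) ω i - θhat n u ω i) ^ 2 ∂μ
          ≤ K * (w u / n) := by
        intro u
        refine le_trans ?_ (hmom u).2
        refine integral_mono (hΔsq_int u) (hmom u).1 (fun ω => ?_)
        have h1 : |(θhat n (u+1) ω - θhat n u ω) i| ≤ l2norm (θhat n (u+1) ω - θhat n u ω) :=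
          abs_le_l2norm _ i
        have h2 : (θhat n (u+1) ω - θhat n u ω) i = θhat n (u+1) ω i - θhat n u ω i := rfl
        rw [h2] at h1
        nlinarith [abs_nonneg (θhat n (u+1) ω i - θhat n u ω i),
          sq_abs (θhat n (u+1) ω i - θhat n u ω i)]
      have h0_int : Integrable (fun ω => θhat n 0 ω i) μ := by
        refine (integrable_const (θstar i)).congr ?_
        filter_upwards [h0 n] with ω hω
        rw [hω]
      have hbias' : ∀ u : ℕ, ∀ᵐ ω ∂μ,
          |(μ[(fun ω' => θhat n (u+1) ω' i) | (F n) u]) ω - θhat n u ω i|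
            ≤ b * v i * (w u / n) := by
        intro u
        have h := hbias n hn (u+1) (by omega) i
        simp only [Nat.add_sub_cancel] at h
        filter_upwards [h] with ω hω
        refine le_trans hω ?_
        exact mul_le_mul_of_nonneg_left (hkey n hn u ρ hρ) (mul_nonneg hb.le (hv i))
      obtain ⟨M, G, hMG, hGb, hMint, hMval⟩ := martingale_decomp μ (F n)
        (fun t ω => θhat n t ω i) (fun t => hfmF t i) h0_int
        (fun u => K * (w u / n)) (fun u => b * v i * (w u / n))
        hΔsq_int hΔsq_val hbias' T
      refine ⟨M, G, hMG, ?_, ?_⟩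
      · filter_upwards [hGb] with ω hω
        refine hω.trans ?_
        calc ∑ u ∈ Finset.range T, b * v i * (w u / n)
            = (b * v i / n) * ∑ u ∈ Finset.range T, w u := by
              rw [Finset.mul_sum]
              refine Finset.sum_congr rfl (fun u _ => ?_)
              ring
          _ ≤ (b * v i / n) * W := by
              refine mul_le_mul_of_nonneg_left (hWsum T) ?_
              have := hv i
              positivity
          _ = b * v i * W / n := by ring
      · refine (cheb μ M hMint hε).trans ?_
        have hsum : ∑ u ∈ Finset.range T, (2 * (K * (w u / n)) + 2 * (b * v i * (w u / n)) ^ 2)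
            ≤ D i * W / n := by
          calc ∑ u ∈ Finset.range T, (2 * (K * (w u / n)) + 2 * (b * v i * (w u / n)) ^ 2)
              ≤ ∑ u ∈ Finset.range T, D i * (w u / n) := by
                refine Finset.sum_le_sum (fun u _ => ?_)
                have hwn0 : 0 ≤ w u / n := by positivity
                have hwn1 : w u / n ≤ 1 := by
                  rw [div_le_one hn0]
                  exact (hw_le_one u).trans hn1
                simp only [hD]
                nlinarith [sq_nonneg (b * v i), mul_nonneg (sq_nonneg (b * v i)) hwn0]
            _ = D i / n * ∑ u ∈ Finset.range T, w u := by
                rw [Finset.mul_sum]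
                refine Finset.sum_congr rfl (fun u _ => ?_)
                ring
            _ ≤ D i / n * W := by
                refine mul_le_mul_of_nonneg_left (hWsum T) ?_
                have := hD_nonneg i
                positivity
            _ = D i * W / n := by ring
        have h2 : ∫ ω, M ω ^ 2 ∂μ ≤ D i * W / n := hMval.trans hsum
        have hε2 : (0:ℝ) < ε ^ 2 := by positivity
        exact div_le_div_of_nonneg_right h2 hε2.le
    -- combine coordinates
    intro T
    choose Mi Gi hdecomp hGb hch using fun i => per_i i T
    have hae : ∀ᵐ ω ∂μ, ω ∈ {ω | δ ≤ l2norm (θhat n T ω - θstar)}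
        → ω ∈ ⋃ i, {ω | ε ≤ |Mi i ω|} := by
      filter_upwards [h0 n, ae_all_iff.mpr (fun i => hGb i)] with ω h00 hGω hmem
      obtain ⟨i, hi⟩ := exists_coord_ge hp (θhat n T ω - θstar) hδ hmem
      refine Set.mem_iUnion.mpr ⟨i, ?_⟩
      have hx : (θhat n T ω - θstar) i = θhat n T ω i - θstar i := rfl
      have h1 : θhat n T ω i - θstar i = Mi i ω + Gi i ω := by
        have h := hdecomp i ω
        rw [h00] at h
        exact h
      have h2 : δ / Real.sqrt p = 2 * ε := by
        rw [hε_def, hsp]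
        field_simp
      have h3 : |Gi i ω| ≤ ε := (hGω i).trans (hsmall i)
      simp only [Set.mem_setOf_eq]
      rw [hx, h1, h2] at hi
      have h4 : |Mi i ω + Gi i ω| ≤ |Mi i ω| + |Gi i ω| := abs_add_le _ _
      linarith
    have hmeasure : (μ {ω | δ ≤ l2norm (θhat n T ω - θstar)}).toReal
        ≤ ∑ i, (μ {ω | ε ≤ |Mi i ω|}).toReal := by
      have h1 : μ {ω | δ ≤ l2norm (θhat n T ω - θstar)} ≤ μ (⋃ i, {ω | ε ≤ |Mi i ω|}) :=
        measure_mono_ae hae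
      have h2 : μ (⋃ i, {ω | ε ≤ |Mi i ω|}) ≤ ∑ i, μ {ω | ε ≤ |Mi i ω|} :=
        measure_iUnion_fintype_le μ _
      calc (μ {ω | δ ≤ l2norm (θhat n T ω - θstar)}).toReal
          ≤ (∑ i, μ {ω | ε ≤ |Mi i ω|}).toReal :=
            ENNReal.toReal_mono (by
              refine (ENNReal.sum_lt_top.mpr (fun i _ => ?_)).ne
              exact measure_lt_top μ _) (h1.trans h2)
        _ = ∑ i, (μ {ω | ε ≤ |Mi i ω|}).toReal :=
            ENNReal.toReal_sum (fun i _ => measure_ne_top μ _)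
    refine hmeasure.trans ?_
    calc ∑ i, (μ {ω | ε ≤ |Mi i ω|}).toReal ≤ ∑ i, D i * W / n / ε ^ 2 :=
          Finset.sum_le_sum (fun i _ => hch i)
      _ = A / n := by
          rw [hA, Finset.sum_div, Finset.sum_div]
          refine Finset.sum_congr rfl (fun i _ => ?_)
          ring
  -- wrap up with limsup and squeeze
  have hev : ∀ᶠ n : ℕ in atTop, 1 ≤ n ∧ ∀ i, b * v i * W / n ≤ ε := by
    have h1 : ∀ᶠ n : ℕ in atTop, ∀ i, b * v i * W / n ≤ ε := by
      refine eventually_all.mpr (fun i => ?_)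
      exact (tendsto_const_div_atTop_nhds_zero_nat (b * v i * W)).eventually
        (eventually_le_nhds hε)
    filter_upwards [eventually_ge_atTop 1, h1] with n h2 h3
    exact ⟨h2, h3⟩
  refine tendsto_of_tendsto_of_tendsto_of_le_of_le'
    (tendsto_const_nhds : Tendsto (fun _ : ℕ => (0:ℝ)) atTop (nhds 0))
    (tendsto_const_div_atTop_nhds_zero_nat A) ?_ ?_
  · filter_upwards [hev] with n hn
    have hub : ∀ T, (μ {ω | δ ≤ l2norm (θhat n T ω - θstar)}).toReal ≤ A / n :=
      main n hn.1 hn.2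
    refine le_limsup_of_frequently_le
      (Filter.Frequently.of_forall (fun T => ENNReal.toReal_nonneg)) ?_
    exact isBoundedUnder_of ⟨A / n, fun T => hub T⟩
  · filter_upwards [hev] with n hn
    have hub : ∀ T, (μ {ω | δ ≤ l2norm (θhat n T ω - θstar)}).toReal ≤ A / n :=
      main n hn.1 hn.2
    refine limsup_le_of_le ?_ (Filter.Eventually.of_forall hub)
    exact isCoboundedUnder_le_of_le atTop (fun T => ENNReal.toReal_nonneg)
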